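/- Let E and F be finite-dimensional complex inner product spaces, let V : E → F be a linear isometry, let P be an orthogonal projection on E, let Q be an orthogonal projection on F, and let η ≥ 0. Suppose (correctness) that |‖Q (V φ)‖² − ‖P φ‖²| ≤ η for every unit vector φ ∈ E. Let ψ₀ and ψ₁ be unit vectors of E with P ψ₀ = 0 and P ψ₁ = ψ₁. Then there exists a unitary operator W on F such that W (V ψ₀) = V ψ₁; consequently ‖Q (W (V ψ₀))‖² ≥ 1 − η while ‖Q (V ψ₀)‖² ≤ η. (This is the mathematical core of Theorem 3.5: for a fully correct signing isometry, an attacker acting unitarily on signatures can convert a valid signature of a state with measurement outcome 0 into a valid signature of a state with measurement outcome 1, flipping the outcome of the measurement Q with probability at least 1 − η.) -/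

import Mathlib

open scoped InnerProductSpace

open Module in
/-- Any two unit vectors in a finite-dimensional complex inner product space are related by a
unitary. -/
lemma exists_unitary_map_unit {F : Type*} [NormedAddCommGroup F] [InnerProductSpace ℂ F]
    [FiniteDimensional ℂ F] {x y : F} (hx : ‖x‖ = 1) (hy : ‖y‖ = 1) :
    ∃ W : F ≃ₗᵢ[ℂ] F, W x = y := by
  have hn : Fintype.card (Fin (finrank ℂ F)) = finrank ℂ F := by simp
  have hpos : 0 < finrank ℂ F := by
    have : x ≠ 0 := by intro h; rw [h] at hx; simp at hx
    exact finrank_pos_iff.2 ⟨⟨x, 0, this⟩⟩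
  have key : ∀ z : F, ‖z‖ = 1 → ∃ b : OrthonormalBasis (Fin (finrank ℂ F)) ℂ F,
      b ⟨0, hpos⟩ = z := by
    intro z hz
    have horth : Orthonormal ℂ (({⟨0, hpos⟩} : Set (Fin (finrank ℂ F))).restrict
        (fun _ => z)) := by
      rw [orthonormal_iff_ite]
      rintro ⟨i, hi⟩ ⟨j, hj⟩
      simp only [Set.mem_singleton_iff] at hi hj
      subst hi; subst hj
      rw [if_pos rfl, @inner_self_eq_norm_sq_to_K ℂ]; exact (by simp [hz] : ((‖z‖ : ℝ) : ℂ) ^ 2 = 1)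
    obtain ⟨b, hb⟩ := horth.exists_orthonormalBasis_extension_of_card_eq hn.symm
    exact ⟨b, hb _ rfl⟩
  obtain ⟨b₀, hb₀⟩ := key x hx
  obtain ⟨b₁, hb₁⟩ := key y hy
  refine ⟨b₀.repr.trans b₁.repr.symm, ?_⟩
  simp [← hb₀, ← hb₁, b₀.repr_self]

/-- Core of the full-correctness impossibility theorem: for a fully correct signing isometry,
an attacker acting unitarily on signatures can convert a valid signature of a state with
measurement outcome `0` into a valid signature of a state with measurement outcome `1`,
flipping the outcome of the verification-side measurement `Q` with probability at least
`1 − η`. -/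
theorem signature_forgery_attack
    {E F : Type*} [NormedAddCommGroup E] [InnerProductSpace ℂ E]
    [NormedAddCommGroup F] [InnerProductSpace ℂ F]
    [FiniteDimensional ℂ E] [FiniteDimensional ℂ F]
    (V : E →ₗᵢ[ℂ] F)
    (P : E →L[ℂ] E)
    (hPidem : ∀ x, P (P x) = P x)
    (hPsa : ∀ x y, ⟪P x, y⟫_ℂ = ⟪x, P y⟫_ℂ)
    (Q : F →L[ℂ] F)
    (hQidem : ∀ x, Q (Q x) = Q x)
    (hQsa : ∀ x y, ⟪Q x, y⟫_ℂ = ⟪x, Q y⟫_ℂ)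
    (η : ℝ) (hη : 0 ≤ η)
    (hcorr : ∀ φ : E, ‖φ‖ = 1 → |‖Q (V φ)‖ ^ 2 - ‖P φ‖ ^ 2| ≤ η)
    (ψ₀ ψ₁ : E) (hψ₀ : ‖ψ₀‖ = 1) (hψ₁ : ‖ψ₁‖ = 1)
    (hP₀ : P ψ₀ = 0) (hP₁ : P ψ₁ = ψ₁) :
    ∃ W : F ≃ₗᵢ[ℂ] F,
      W (V ψ₀) = V ψ₁
        ∧ 1 - η ≤ ‖Q (W (V ψ₀))‖ ^ 2
        ∧ ‖Q (V ψ₀)‖ ^ 2 ≤ η := by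
  have h0 : ‖V ψ₀‖ = 1 := by rw [V.norm_map]; exact hψ₀
  have h1 : ‖V ψ₁‖ = 1 := by rw [V.norm_map]; exact hψ₁
  obtain ⟨W, hW⟩ := exists_unitary_map_unit h0 h1
  have hc0 := hcorr ψ₀ hψ₀
  have hc1 := hcorr ψ₁ hψ₁
  rw [hP₀] at hc0
  rw [hP₁, hψ₁] at hc1
  simp only [norm_zero] at hc0 hc1
  rw [abs_le] at hc0 hc1
  refine ⟨W, hW, ?_, ?_⟩
  · rw [hW]; linarith [hc1.1]
  · nlinarith [hc0.2, sq_nonneg (‖Q (V ψ₀)‖)]
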